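/- Fix M > 0, ρ₀ > 0 and R > 2M + ρ₀, and set I := (2M + ρ₀, R). Let G : ℝ → ℝ be continuous, and let λ be continuous on the closure of I, differentiable on I, with λ(2M + ρ₀) = −(1/2)·log(1 − 2M/(2M + ρ₀)), satisfying for all r ∈ I the equation e^{−2λ(r)}(2rλ'(r) − 1) + 1 = 8πr²G(r). Then for all r ∈ I, e^{−2λ(r)} = 1 − 2m(r)/r, where m(r) := M + 4π∫_{2M+ρ₀}^{r} s²G(s) ds. -/

import Mathlib

/-- The quasi-local mass `m(r) = M + 4π ∫_{2M+ρ₀}^r s² G(s) ds`. -/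
noncomputable def mfun (M ρ₀ : ℝ) (G : ℝ → ℝ) (r : ℝ) : ℝ :=
  M + 4*Real.pi * ∫ s in (2*M+ρ₀)..r, s^2 * G s

theorem stmt16 (M ρ₀ R : ℝ) (hM : 0 < M) (hρ : 0 < ρ₀) (hR : 2*M + ρ₀ < R)
    (G lam : ℝ → ℝ) (hG : Continuous G)
    (hcont : ContinuousOn lam (Set.Icc (2*M+ρ₀) R))
    (hdiff : ∀ r ∈ Set.Ioo (2*M+ρ₀) R, DifferentiableAt ℝ lam r)
    (hbc : lam (2*M+ρ₀) = -(1/2) * Real.log (1 - 2*M/(2*M+ρ₀)))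
    (heq : ∀ r ∈ Set.Ioo (2*M+ρ₀) R,
      Real.exp (-2*lam r) * (2*r*deriv lam r - 1) + 1 = 8*Real.pi*r^2*G r) :
    ∀ r ∈ Set.Ioo (2*M+ρ₀) R,
      Real.exp (-2*lam r) = 1 - 2*(mfun M ρ₀ G r)/r := by
  have ha0 : 0 < 2*M + ρ₀ := by positivity
  set f : ℝ → ℝ := fun r => r - r * Real.exp (-2 * lam r) - 2 * mfun M ρ₀ G r with hfdef
  have hcG : Continuous (fun s : ℝ => s^2 * G s) := by continuity
  -- derivative of mfun everywhere
  have hmd : ∀ r : ℝ, HasDerivAt (mfun M ρ₀ G) (4*Real.pi * (r^2 * G r)) r := by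
    intro r
    have hI : HasDerivAt (fun u => ∫ s in (2*M+ρ₀)..u, s^2 * G s) (r^2 * G r) r :=
      intervalIntegral.integral_hasDerivAt_right (hcG.intervalIntegrable _ _)
        (hcG.stronglyMeasurableAtFilter _ _) hcG.continuousAt
    exact (hI.const_mul (4*Real.pi)).const_add M
  -- f has derivative 0 on the open interval
  have hfd : ∀ r ∈ Set.Ioo (2*M+ρ₀) R, HasDerivAt f 0 r := by
    intro r hr
    have hld : HasDerivAt lam (deriv lam r) r := (hdiff r hr).hasDerivAt
    have he : HasDerivAt (fun x => Real.exp (-2 * lam x))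
        (Real.exp (-2 * lam r) * (-2 * deriv lam r)) r :=
      (hld.const_mul (-2)).exp
    have h1 : HasDerivAt (fun x => x * Real.exp (-2 * lam x))
        (1 * Real.exp (-2 * lam r) + r * (Real.exp (-2 * lam r) * (-2 * deriv lam r))) r :=
      (hasDerivAt_id r).mul he
    have h2 : HasDerivAt f
        (1 - (1 * Real.exp (-2 * lam r) + r * (Real.exp (-2 * lam r) * (-2 * deriv lam r)))
          - 2 * (4*Real.pi * (r^2 * G r))) r :=
      ((hasDerivAt_id r).sub h1).sub ((hmd r).const_mul 2)
    have hz : (1 - (1 * Real.exp (-2 * lam r) + r * (Real.exp (-2 * lam r) * (-2 * deriv lam r)))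
          - 2 * (4*Real.pi * (r^2 * G r))) = 0 := by
      linear_combination heq r hr
    rwa [hz] at h2
  -- f is continuous on the closed interval
  have hfc : ContinuousOn f (Set.Icc (2*M+ρ₀) R) := by
    apply ContinuousOn.sub
    · exact continuousOn_id.sub (continuousOn_id.mul
        (Real.continuous_exp.comp_continuousOn (continuousOn_const.mul hcont)))
    · exact (continuous_const.mul (continuous_iff_continuousAt.2
        fun x => (hmd x).continuousAt)).continuousOn
  have hint : interior (Set.Icc (2*M+ρ₀) R) = Set.Ioo (2*M+ρ₀) R := interior_Icc
  have hdiffInt : DifferentiableOn ℝ f (interior (Set.Icc (2*M+ρ₀) R)) := by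
    rw [hint]; exact fun x hx => (hfd x hx).differentiableAt.differentiableWithinAt
  have hderiv0 : ∀ x ∈ interior (Set.Icc (2*M+ρ₀) R), deriv f x = 0 := by
    rw [hint]; exact fun x hx => (hfd x hx).deriv
  have hmono : MonotoneOn f (Set.Icc (2*M+ρ₀) R) :=
    monotoneOn_of_deriv_nonneg (convex_Icc _ _) hfc hdiffInt
      (fun x hx => le_of_eq (hderiv0 x hx).symm)
  have hanti : AntitoneOn f (Set.Icc (2*M+ρ₀) R) :=
    antitoneOn_of_deriv_nonpos (convex_Icc _ _) hfc hdiffInt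
      (fun x hx => le_of_eq (hderiv0 x hx))
  -- f at the left endpoint is 0
  have hfa : f (2*M+ρ₀) = 0 := by
    have hpos : 0 < 1 - 2*M/(2*M+ρ₀) := by
      rw [sub_pos, div_lt_one ha0]; linarith
    have hexp : Real.exp (-2 * lam (2*M+ρ₀)) = 1 - 2*M/(2*M+ρ₀) := by
      rw [hbc]
      have : -2 * (-(1/2) * Real.log (1 - 2*M/(2*M+ρ₀)))
          = Real.log (1 - 2*M/(2*M+ρ₀)) := by ring
      rw [this, Real.exp_log hpos]
    have hmval : mfun M ρ₀ G (2*M+ρ₀) = M := by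
      simp [mfun]
    simp only [hfdef, hexp, hmval]
    field_simp; ring
  intro r hr
  have hrIcc : r ∈ Set.Icc (2*M+ρ₀) R := Set.mem_Icc.2 ⟨le_of_lt hr.1, le_of_lt hr.2⟩
  have haIcc : (2*M+ρ₀) ∈ Set.Icc (2*M+ρ₀) R := Set.mem_Icc.2 ⟨le_refl _, le_of_lt hR⟩
  have h1 := hmono haIcc hrIcc (le_of_lt hr.1)
  have h2 := hanti haIcc hrIcc (le_of_lt hr.1)
  have hfr : f r = 0 := by rw [← hfa]; exact le_antisymm h2 h1
  have hr0 : r ≠ 0 := by have := hr.1; intro h; rw [h] at this; linarith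
  simp only [hfdef] at hfr
  rw [show (1 : ℝ) - 2*(mfun M ρ₀ G r)/r = (r - 2*mfun M ρ₀ G r)/r by field_simp,
    eq_div_iff hr0]
  linear_combination (-1 : ℝ)*hfr
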